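/- Let K be a field and d, n > 1 integers, N = binom(d+n-1, d). If U_0 is a subspace of K^n intersecting each of d subspaces U_1, …, U_d of K^n only in 0, then ⟨v_d(U_0)⟩ ∩ ⟨v_d(U_1) ∪ ⋯ ∪ v_d(U_d)⟩ = 0 in K^N. -/

import Mathlib

/-- Index type for `K^N`, `N = (d+n-1).choose d`: sequences `α` of `n`
nonnegative integers summing to `d`. -/
def VIdx (n d : ℕ) : Type := {α : Fin n → ℕ // ∑ i, α i = d}

/-- The (vector) Veronese map `v_d : K^n → K^N`, sending `t` to `(t^α)_α`. -/
def vero (K : Type*) [Field K] (n d : ℕ) (t : Fin n → K) : VIdx n d → K :=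
  fun α => ∏ i, t i ^ α.1 i

/-- Fiberwise counting: a product over `Fin d` of values `t (f k)` is the product of
powers of `t i` with exponents the fiber cardinalities. -/
private lemma prod_comp_eq_prod_pow {K : Type*} [CommMonoid K] {n d : ℕ}
    (f : Fin d → Fin n) (t : Fin n → K) :
    ∏ k, t (f k) = ∏ i, t i ^ (Finset.univ.filter fun k => f k = i).card := by
  rw [← Finset.prod_fiberwise_of_maps_to' (fun k _ => Finset.mem_univ (f k)) t]
  exact Finset.prod_congr rfl fun i _ => Finset.prod_const (t i)

/-- Any `α : Fin n → ℕ` summing to `d` is the fiber-count function of some `c : Fin d → Fin n`. -/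
private lemma exists_rep {n d : ℕ} (α : Fin n → ℕ) (hα : ∑ i, α i = d) :
    ∃ c : Fin d → Fin n, ∀ i, (Finset.univ.filter fun k => c k = i).card = α i := by
  classical
  set L : List (Fin n) := (List.finRange n).flatMap fun j => List.replicate (α j) j with hL
  have hlen : L.length = d := by
    rw [hL, List.length_flatMap]
    simp only [Function.comp_def, List.length_replicate]
    rw [← Fin.sum_univ_def, hα]
  refine ⟨List.Vector.get (⟨L, hlen⟩ : List.Vector (Fin n) d), fun i => ?_⟩
  rw [Fin.card_filter_univ_eq_vector_get_eq_count i (⟨L, hlen⟩ : List.Vector (Fin n) d)]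
  show L.count i = α i
  rw [hL, List.count_flatMap]
  have : (List.map (List.count i ∘ fun j => List.replicate (α j) j) (List.finRange n))
      = (List.finRange n).map fun j => if i = j then α j else 0 := by
    refine List.map_congr_left fun j _ => ?_
    simp only [Function.comp_apply, List.count_replicate, beq_iff_eq]
    exact if_congr eq_comm rfl rfl
  rw [this, ← Fin.sum_univ_def]
  simp

/-- Expansion: a product of linear functionals factors linearly through the Veronese map. -/
private lemma exists_phi (K : Type*) [Field K] (n d : ℕ)
    (m : Fin d → ((Fin n → K) →ₗ[K] K)) :
    ∃ φ : (VIdx n d → K) →ₗ[K] K, ∀ t, φ (vero K n d t) = ∏ k, m k t := by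
  classical
  have hidx : ∀ f : Fin d → Fin n,
      (∑ i, (Finset.univ.filter fun k => f k = i).card) = d := by
    intro f
    exact (Finset.card_eq_sum_card_fiberwise fun k _ =>
      Finset.mem_univ (f k)).symm.trans (Finset.card_fin d)
  refine ⟨∑ f : Fin d → Fin n, (∏ k, m k (fun j => if f k = j then 1 else 0)) •
      LinearMap.proj (R := K) (φ := fun _ : VIdx n d => K)
      (⟨fun i => (Finset.univ.filter fun k => f k = i).card, hidx f⟩ : VIdx n d),
    fun t => ?_⟩
  have hmt : ∀ k, m k t = ∑ i, t i * m k (fun j => if i = j then (1:K) else 0) := by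
    intro k
    conv_lhs => rw [pi_eq_sum_univ t]
    rw [map_sum]
    exact Finset.sum_congr rfl fun i _ => by rw [map_smul, smul_eq_mul]
  have hRHS : (∏ k, m k t) = ∑ f : Fin d → Fin n,
      ∏ k, (t (f k) * m k (fun j => if f k = j then (1:K) else 0)) := by
    calc (∏ k, m k t)
        = ∏ k, ∑ i, t i * m k (fun j => if i = j then (1:K) else 0) :=
          Finset.prod_congr rfl fun k _ => hmt k
      _ = ∑ f ∈ Fintype.piFinset (fun _ : Fin d => (Finset.univ : Finset (Fin n))),
            ∏ k, t (f k) * m k (fun j => if f k = j then (1:K) else 0) :=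
          Finset.prod_univ_sum _ _
      _ = _ := by rw [Fintype.piFinset_univ]
  rw [LinearMap.sum_apply]
  simp only [LinearMap.smul_apply, LinearMap.proj_apply, smul_eq_mul]
  rw [hRHS]
  refine Finset.sum_congr rfl fun f _ => ?_
  rw [Finset.prod_mul_distrib, mul_comm]
  congr 1
  exact (prod_comp_eq_prod_pow f t).symm

/-- Extension of a coordinate functional from `U₀` by zero on a disjoint subspace. -/
private lemma exists_m {K : Type*} [Field K] {n : ℕ} {U₀ V : Submodule K (Fin n → K)}
    (h : U₀ ⊓ V = ⊥) (i : Fin n) :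
    ∃ m : (Fin n → K) →ₗ[K] K, (∀ u ∈ U₀, m u = u i) ∧ ∀ w ∈ V, m w = 0 := by
  obtain ⟨C₀, hC₀⟩ := Submodule.exists_isCompl (U₀ ⊔ V)
  have hcompl : IsCompl U₀ (V ⊔ C₀) := by
    constructor
    · rw [Submodule.disjoint_def]
      intro x hx0 hx1
      obtain ⟨b, hb, c, hc, rfl⟩ := Submodule.mem_sup.1 hx1
      have hcc : c ∈ (U₀ ⊔ V) ⊓ C₀ := by
        constructor
        · have : c = (b + c) - b := by ring
          rw [this]
          exact Submodule.sub_mem _ (Submodule.mem_sup_left hx0) (Submodule.mem_sup_right hb)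
        · exact hc
      rw [(disjoint_iff.1 hC₀.disjoint)] at hcc
      rw [(Submodule.mem_bot K).1 hcc, add_zero] at hx0 ⊢
      have : b ∈ U₀ ⊓ V := ⟨hx0, hb⟩
      rw [h] at this
      exact (Submodule.mem_bot K).1 this
    · rw [codisjoint_iff, ← sup_assoc]
      exact codisjoint_iff.1 hC₀.codisjoint
  refine ⟨(LinearMap.proj i).comp ((Submodule.subtype U₀).comp
      (Submodule.projectionOnto U₀ (V ⊔ C₀) hcompl)), fun u hu => ?_, fun w hw => ?_⟩
  · simp [Submodule.projectionOnto_apply_of_mem_left hcompl hu]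
  · simp [Submodule.projectionOnto_apply_of_mem_right hcompl (Submodule.mem_sup_left hw)]

/-- If a subspace `U_0` of `K^n` intersects each of `d` subspaces
`U_1, …, U_d` only in `0`, then `⟨v_d(U_0)⟩ ∩ ⟨v_d(U_1), …, v_d(U_d)⟩ = 0`. -/
theorem veronesean_almost_independence (K : Type*) [Field K] (d n : ℕ)
    (hd : 1 < d) (hn : 1 < n)
    (U₀ : Submodule K (Fin n → K)) (U : Fin d → Submodule K (Fin n → K))
    (hU : ∀ j, U₀ ⊓ U j = ⊥) :
    Submodule.span K (vero K n d '' (U₀ : Set (Fin n → K))) ⊓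
      Submodule.span K (⋃ j, vero K n d '' (U j : Set (Fin n → K))) = ⊥ := by
  classical
  rw [eq_bot_iff]
  intro x hx
  obtain ⟨hx0, hx1⟩ := Submodule.mem_inf.1 hx
  rw [Submodule.mem_bot K]
  funext a
  obtain ⟨α, hα⟩ := a
  show x ⟨α, hα⟩ = 0
  obtain ⟨c, hc⟩ := exists_rep α hα
  choose m hmA hmB using fun k => exists_m (hU k) (c k)
  obtain ⟨φ, hφ⟩ := exists_phi K n d m
  have hφ1 : φ x = 0 := by
    have hle : Submodule.span K (⋃ j, vero K n d '' (U j : Set (Fin n → K)))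
        ≤ LinearMap.ker φ := by
      rw [Submodule.span_le]
      intro y hy
      simp only [Set.mem_iUnion, Set.mem_image, SetLike.mem_coe] at hy
      obtain ⟨j, w, hw, rfl⟩ := hy
      rw [SetLike.mem_coe, LinearMap.mem_ker, hφ]
      exact Finset.prod_eq_zero (Finset.mem_univ j) (hmB j w hw)
    exact LinearMap.mem_ker.1 (hle hx1)
  have hφ0 : x ⟨α, hα⟩ - φ x = 0 := by
    have hle : Submodule.span K (vero K n d '' (U₀ : Set (Fin n → K)))
        ≤ LinearMap.ker (LinearMap.proj (φ := fun _ : VIdx n d => K) (⟨α, hα⟩ : VIdx n d) - φ) := by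
      rw [Submodule.span_le]
      rintro y ⟨u, hu, rfl⟩
      rw [SetLike.mem_coe, LinearMap.mem_ker, LinearMap.sub_apply,
        hφ, sub_eq_zero]
      calc vero K n d u ⟨α, hα⟩ = ∏ i, u i ^ α i := rfl
        _ = ∏ i, u i ^ (Finset.univ.filter fun k => c k = i).card := by
            exact Finset.prod_congr rfl fun i _ => by rw [hc i]
        _ = ∏ k, u (c k) := (prod_comp_eq_prod_pow c u).symm
        _ = ∏ k, m k u := Finset.prod_congr rfl fun k _ => (hmA k u hu).symm
    have := LinearMap.mem_ker.1 (hle hx0)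
    rwa [LinearMap.sub_apply] at this
  rw [sub_eq_zero.1 hφ0, hφ1]
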